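/- Let S be a finite set with |S| ≥ 2, let φ_s : ℝ → ℝ for each s ∈ S, and let Φ(u)_s = φ_s(u_s). Suppose NSD(X,S,U) ⊆ NSD(X,S,Φ∘U) for every nonempty finite X and every U : X × S → ℝ. Then either (i) each φ_s is concave and weakly increasing, or (ii) some φ_s is constant. -/

import Mathlib

open Finset

def IsDist {X : Type} [Fintype X] (p : X → ℝ) : Prop :=
  (∀ x, 0 ≤ p x) ∧ (∑ x, p x) = 1

def NSD {X S : Type} [Fintype X] (S' : Set S) (U : X → S → ℝ) : Set X :=
  {x | ¬ ∃ p : X → ℝ, IsDist p ∧ ∀ s ∈ S', (∑ y, U y s * p y) > U x s}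

def NWD {X S : Type} [Fintype X] (S' : Set S) (U : X → S → ℝ) : Set X :=
  {x | ¬ ∃ p : X → ℝ, IsDist p ∧ (∀ s ∈ S', (∑ y, U y s * p y) ≥ U x s) ∧
      (∃ s ∈ S', (∑ y, U y s * p y) > U x s)}

def NSDhat {X S : Type} (S' : Set S) (U : X → S → ℝ) : Set X :=
  {x | ¬ ∃ y : X, ∀ s ∈ S', U y s > U x s}

def NWDhat {X S : Type} (S' : Set S) (U : X → S → ℝ) : Set X :=
  {x | ¬ ∃ y : X, (∀ s ∈ S', U y s ≥ U x s) ∧ (∃ s ∈ S', U y s > U x s)}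

open scoped Classical


lemma sum_two_point {S : Type} [Fintype S] {s0 s1 : S} (hne : s0 ≠ s1)
    (μ0 μ1 : ℝ) (V : S → ℝ) :
    ∑ s, (if s = s0 then μ0 else if s = s1 then μ1 else 0) * V s
      = μ0 * V s0 + μ1 * V s1 := by
  have key : ∀ s, (if s = s0 then μ0 else if s = s1 then μ1 else 0) * V s
      = (if s = s0 then μ0 * V s else 0) + (if s = s1 then μ1 * V s else 0) := by
    intro s
    by_cases h0 : s = s0
    · subst h0; simp [hne]
    · by_cases h1 : s = s1 <;> simp [h0, h1, Ne.symm hne]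
  rw [Finset.sum_congr rfl (fun s _ => key s), Finset.sum_add_distrib,
    Finset.sum_ite_eq' univ s0, Finset.sum_ite_eq' univ s1]
  simp

lemma sum_one_point {S : Type} [Fintype S] (s0 : S) (V : S → ℝ) :
    ∑ s, (if s = s0 then (1:ℝ) else 0) * V s = V s0 := by
  have key : ∀ s, (if s = s0 then (1:ℝ) else 0) * V s
      = (if s = s0 then V s else 0) := by
    intro s; by_cases h0 : s = s0 <;> simp [h0]
  rw [Finset.sum_congr rfl (fun s _ => key s), Finset.sum_ite_eq' univ s0]
  simp

lemma mem_NSD_of_belief {X S : Type} [Fintype X] [Fintype S] (U : X → S → ℝ) (x : X)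
    (μ : S → ℝ) (hμ0 : ∀ s, 0 ≤ μ s) (hμ1 : (∑ s, μ s) = 1)
    (hBR : ∀ y, (∑ s, μ s * U y s) ≤ ∑ s, μ s * U x s) :
    x ∈ NSD (Set.univ : Set S) U := by
  simp only [NSD, Set.mem_setOf_eq]
  rintro ⟨p, ⟨hp0, hp1⟩, hdom⟩
  have hex : ∃ s, 0 < μ s := by
    by_contra hno
    push_neg at hno
    have : (∑ s, μ s) ≤ 0 := Finset.sum_nonpos (fun s _ => hno s)
    linarith
  obtain ⟨s', hs'⟩ := hex
  have key1 : (∑ s, μ s * U x s) < ∑ s, μ s * (∑ y, U y s * p y) := by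
    apply Finset.sum_lt_sum
    · intro s _
      exact mul_le_mul_of_nonneg_left (le_of_lt (hdom s (Set.mem_univ s))) (hμ0 s)
    · exact ⟨s', Finset.mem_univ s', mul_lt_mul_of_pos_left (hdom s' (Set.mem_univ s')) hs'⟩
  have key2 : (∑ s, μ s * (∑ y, U y s * p y)) = ∑ y, p y * (∑ s, μ s * U y s) := by
    calc (∑ s, μ s * (∑ y, U y s * p y)) = ∑ s, ∑ y, μ s * (U y s * p y) := by
          simp [Finset.mul_sum]
      _ = ∑ y, ∑ s, μ s * (U y s * p y) := Finset.sum_comm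
      _ = ∑ y, p y * (∑ s, μ s * U y s) := by
          refine Finset.sum_congr rfl (fun y _ => ?_)
          rw [Finset.mul_sum]
          exact Finset.sum_congr rfl (fun s _ => by ring)
  have key3 : (∑ y, p y * (∑ s, μ s * U y s)) ≤ ∑ y, p y * (∑ s, μ s * U x s) :=
    Finset.sum_le_sum (fun y _ => mul_le_mul_of_nonneg_left (hBR y) (hp0 y))
  have key4 : (∑ y, p y * (∑ s, μ s * U x s)) = ∑ s, μ s * U x s := by
    rw [← Finset.sum_mul, hp1, one_mul]
  rw [key2] at key1
  linarith



-- Core analysis lemma: if φ is monotone and nonconstant, then the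
-- "boosted concavity" inequality must fail somewhere.
set_option maxHeartbeats 2000000 in
lemma main_key (φ : ℝ → ℝ) (hmono : Monotone φ) {p q : ℝ} (hpq : φ p < φ q)
    {τ θ : ℝ} (hτ : 0 < τ) (hθ : 0 < θ) (hs1 : τ + θ < 1) :
    ∃ u w τ', u < w ∧ τ ≤ τ' ∧ τ' < 1 ∧ τ' ≤ τ + θ ∧
      φ (τ * w + (1 - τ) * u) < τ' * φ w + (1 - τ') * φ u := by
  by_contra hcon
  push_neg at hcon
  set s : ℝ := τ + θ with hsdef
  have hτ1 : τ < 1 := by linarith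
  have hst : τ < s := by linarith
  have hs0 : 0 < s := by linarith
  have hpltq : p < q := by
    by_contra hh
    push_neg at hh
    exact absurd (hmono hh) (not_le.2 hpq)
  have R1 : ∀ u w : ℝ, u < w → s * φ w + (1 - s) * φ u ≤ φ (τ * w + (1 - τ) * u) :=
    fun u w huw => hcon u w s huw (by linarith) hs1 le_rfl
  -- one-step scaling inequality
  have P1 : ∀ u d : ℝ, 0 < d → s * (φ (u + d) - φ u) ≤ φ (u + τ * d) - φ u := by
    intro u d hd
    have h1 := R1 u (u + d) (by linarith)
    have he : τ * (u + d) + (1 - τ) * u = u + τ * d := by ring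
    rw [he] at h1
    linarith
  -- iterated version
  have Pn : ∀ n : ℕ, ∀ u d : ℝ, 0 < d →
      s ^ n * (φ (u + d) - φ u) ≤ φ (u + τ ^ n * d) - φ u := by
    intro n
    induction n with
    | zero => intro u d _; simp
    | succ n ih =>
      intro u d hd
      have h1 := ih u d hd
      have h2 := P1 u (τ ^ n * d) (by positivity)
      have he : u + τ * (τ ^ n * d) = u + τ ^ (n + 1) * d := by ring
      rw [he] at h2
      calc s ^ (n + 1) * (φ (u + d) - φ u) = s * (s ^ n * (φ (u + d) - φ u)) := by ring
        _ ≤ s * (φ (u + τ ^ n * d) - φ u) := by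
            exact mul_le_mul_of_nonneg_left h1 hs0.le
        _ ≤ φ (u + τ ^ (n + 1) * d) - φ u := h2
  -- choose n with (s/τ)^n ≥ 3
  have hratio : 1 < s / τ := (one_lt_div hτ).2 hst
  obtain ⟨n, hn3⟩ : ∃ n : ℕ, (3 : ℝ) < (s / τ) ^ n := pow_unbounded_of_one_lt 3 hratio
  set σ : ℝ := s ^ n with hσdef
  set ν : ℝ := τ ^ n with hνdef
  have hνpos : 0 < ν := by positivity
  have hσpos : 0 < σ := by positivity
  have hσ1 : σ ≤ 1 := pow_le_one₀ hs0.le (by linarith)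
  have hdivpow : σ / ν = (s / τ) ^ n := by rw [hσdef, hνdef, div_pow]
  set N : ℕ := Nat.floor (1 / ν) with hNdef
  have hNle : (N : ℝ) ≤ 1 / ν := Nat.floor_le (by positivity)
  have hNgt : 1 / ν < (N : ℝ) + 1 := Nat.lt_floor_add_one _
  have hNν : (N : ℝ) * ν ≤ 1 := by
    calc (N : ℝ) * ν ≤ (1 / ν) * ν := by
          exact mul_le_mul_of_nonneg_right hNle hνpos.le
      _ = 1 := by field_simp
  have hσN : 2 ≤ σ * N := by
    have h1 : σ / ν - σ ≤ σ * N := by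
      have : (1 / ν - 1) ≤ (N : ℝ) := by linarith
      have := mul_le_mul_of_nonneg_left this hσpos.le
      calc σ / ν - σ = σ * (1 / ν - 1) := by field_simp
        _ ≤ σ * N := this
    rw [hdivpow] at h1
    linarith
  -- master inequality
  have master : ∀ a d : ℝ, 0 < d → ∀ K : ℕ,
      σ * N * (φ (a + K * (ν * d)) - φ (a + d)) ≤ φ (a + K * (ν * d)) - φ a := by
    intro a d hd K
    set e : ℝ := ν * d with hedef
    have hepos : 0 < e := by positivity
    set g : ℕ → ℝ := fun k => φ (a + k * e) with hgdef
    set G : ℕ → ℝ := fun k => φ (a + k * e + d) with hGdef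
    have tele : ∑ k ∈ range K, (g (k + 1) - g k) = g K - g 0 :=
      Finset.sum_range_sub g K
    have step1 : ∀ k : ℕ, σ * (G k - g k) ≤ g (k + 1) - g k := by
      intro k
      have h1 := Pn n (a + k * e) d hd
      have he1 : a + k * e + τ ^ n * d = a + (k + 1 : ℕ) * e := by
        push_cast
        rw [hedef, ← hνdef]
        ring
      rw [he1] at h1
      simpa [hgdef, hGdef] using h1
    have sumA : σ * (∑ k ∈ range K, (G k - g k)) ≤ g K - g 0 := by
      rw [Finset.mul_sum]
      calc ∑ k ∈ range K, σ * (G k - g k) ≤ ∑ k ∈ range K, (g (k + 1) - g k) :=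
            Finset.sum_le_sum (fun k _ => step1 k)
        _ = g K - g 0 := tele
    have step2 : ∀ k : ℕ, g (k + N) - g k ≤ G k - g k := by
      intro k
      have harg : a + ((k + N : ℕ) : ℝ) * e ≤ a + (k : ℝ) * e + d := by
        push_cast
        have : (N : ℝ) * e ≤ d := by
          calc (N : ℝ) * e = ((N : ℝ) * ν) * d := by rw [hedef]; ring
            _ ≤ 1 * d := mul_le_mul_of_nonneg_right hNν hd.le
            _ = d := one_mul d
        linarith
      have := hmono harg
      simp only [hgdef, hGdef]
      linarith [this]
    have dsum : ∀ k : ℕ, g (k + N) - g k = ∑ i ∈ range N, (g (k + i + 1) - g (k + i)) := by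
      intro k
      have := Finset.sum_range_sub (fun i => g (k + i)) N
      simpa [add_assoc] using this.symm
    have swap : ∑ k ∈ range K, (g (k + N) - g k)
        = ∑ i ∈ range N, (g (i + K) - g (i + 0)) := by
      calc ∑ k ∈ range K, (g (k + N) - g k)
          = ∑ k ∈ range K, ∑ i ∈ range N, (g (k + i + 1) - g (k + i)) :=
            Finset.sum_congr rfl (fun k _ => dsum k)
        _ = ∑ i ∈ range N, ∑ k ∈ range K, (g (k + i + 1) - g (k + i)) := Finset.sum_comm
        _ = ∑ i ∈ range N, (g (i + K) - g (i + 0)) := by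
            refine Finset.sum_congr rfl (fun i _ => ?_)
            have hcg : ∀ k : ℕ, g (k + i + 1) - g (k + i) = g (i + (k + 1)) - g (i + k) := by
              intro k
              have e1 : k + i + 1 = i + (k + 1) := by omega
              have e2 : k + i = i + k := by omega
              rw [e1, e2]
            rw [Finset.sum_congr rfl (fun k _ => hcg k)]
            exact Finset.sum_range_sub (fun k => g (i + k)) K
    have lower : (N : ℝ) * (g K - φ (a + d)) ≤ ∑ k ∈ range K, (g (k + N) - g k) := by
      rw [swap]
      have hterm : ∀ i ∈ range N, g K - φ (a + d) ≤ g (i + K) - g (i + 0) := by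
        intro i hi
        have hiN : i < N := Finset.mem_range.1 hi
        have h1 : g K ≤ g (i + K) := by
          apply hmono
          push_cast
          have hi0 : (0 : ℝ) ≤ (i : ℝ) := Nat.cast_nonneg i
          nlinarith [hepos]
        have h2 : g (i + 0) ≤ φ (a + d) := by
          apply hmono
          simp only [Nat.add_zero]
          push_cast
          have hie : (i : ℝ) * e ≤ d := by
            have : (i : ℝ) ≤ (N : ℝ) := by exact_mod_cast hiN.le
            have h3 : (i : ℝ) * ν ≤ (N : ℝ) * ν := mul_le_mul_of_nonneg_right this hνpos.le
            calc (i : ℝ) * e = ((i : ℝ) * ν) * d := by rw [hedef]; ring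
              _ ≤ 1 * d := mul_le_mul_of_nonneg_right (le_trans h3 hNν) hd.le
              _ = d := one_mul d
          linarith
        linarith
      calc (N : ℝ) * (g K - φ (a + d)) = ∑ _i ∈ range N, (g K - φ (a + d)) := by
            rw [Finset.sum_const, Finset.card_range, nsmul_eq_mul]
        _ ≤ ∑ i ∈ range N, (g (i + K) - g (i + 0)) := Finset.sum_le_sum hterm
    have lower2 : (N : ℝ) * (g K - φ (a + d)) ≤ ∑ k ∈ range K, (G k - g k) :=
      le_trans lower (Finset.sum_le_sum (fun k _ => step2 k))
    have final : σ * ((N : ℝ) * (g K - φ (a + d))) ≤ g K - g 0 :=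
      le_trans (mul_le_mul_of_nonneg_left lower2 hσpos.le) sumA
    have hg0 : g 0 = φ a := by simp [hgdef]
    have hgK : g K = φ (a + K * (ν * d)) := by simp [hgdef, hedef]
    rw [hg0, hgK] at final
    linarith
  -- STEP: halving lemma
  have STEP : ∀ x δ : ℝ, x < q → 0 < δ →
      ∃ x', x - δ ≤ x' ∧ x' < x ∧ 2 * (φ q - φ x) ≤ φ q - φ x' := by
    intro x δ hxq hδ
    obtain ⟨K, hK⟩ := exists_nat_ge (((q - x) / δ + 1) / ν)
    have hqx : 0 < q - x := by linarith
    have hKν : (q - x) / δ + 1 ≤ (K : ℝ) * ν := by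
      have := mul_le_mul_of_nonneg_right hK hνpos.le
      calc (q - x) / δ + 1 = (((q - x) / δ + 1) / ν) * ν := by field_simp
        _ ≤ (K : ℝ) * ν := this
    have hKν1 : 0 < (K : ℝ) * ν - 1 := by
      have : 0 < (q - x) / δ := by positivity
      linarith
    set d : ℝ := (q - x) / ((K : ℝ) * ν - 1) with hddef
    have hdpos : 0 < d := by positivity
    have hdδ : d ≤ δ := by
      rw [hddef]
      have h1 : (q - x) / δ ≤ (K : ℝ) * ν - 1 := by linarith
      have h2 : 0 < (q - x) / δ := by positivity
      calc (q - x) / ((K : ℝ) * ν - 1) ≤ (q - x) / ((q - x) / δ) :=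
            div_le_div_of_nonneg_left hqx.le h2 h1
        _ = δ := by field_simp
    have hkey : (x - d) + (K : ℝ) * (ν * d) = q := by
      have : ((K : ℝ) * ν - 1) * d = q - x := by
        rw [hddef]
        field_simp
      linear_combination this
    have hm := master (x - d) d hdpos K
    rw [hkey] at hm
    have hxd : x - d + d = x := by ring
    rw [hxd] at hm
    refine ⟨x - d, by linarith, by linarith, ?_⟩
    have hφx : φ x ≤ φ q := hmono hxq.le
    have h2 : 2 * (φ q - φ x) ≤ (σ * N) * (φ q - φ x) :=
      mul_le_mul_of_nonneg_right hσN (by linarith)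
    linarith
  -- iterate STEP
  have ITER : ∀ m : ℕ, ∃ x', p - 1 + (1 / 2) ^ m ≤ x' ∧ x' ≤ p ∧
      φ q - φ p ≤ (1 / 2) ^ m * (φ q - φ x') := by
    intro m
    induction m with
    | zero => exact ⟨p, by norm_num, le_rfl, by norm_num⟩
    | succ m ih =>
      obtain ⟨x', h1, h2, h3⟩ := ih
      obtain ⟨x'', h4, h5, h6⟩ := STEP x' ((1 / 2) ^ (m + 1)) (lt_of_le_of_lt h2 hpltq)
        (by positivity)
      refine ⟨x'', ?_, by linarith, ?_⟩
      · have : (1 / 2 : ℝ) ^ m = 2 * (1 / 2) ^ (m + 1) := by ring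
        linarith [h1, h4, this]
      · have hhalf : φ q - φ x' ≤ (1 / 2) * (φ q - φ x'') := by linarith
        calc φ q - φ p ≤ (1 / 2) ^ m * (φ q - φ x') := h3
          _ ≤ (1 / 2) ^ m * ((1 / 2) * (φ q - φ x'')) := by
              apply mul_le_mul_of_nonneg_left hhalf (by positivity)
          _ = (1 / 2) ^ (m + 1) * (φ q - φ x'') := by ring
  -- contradiction
  have hC0 : φ (p - 1) ≤ φ p := hmono (by linarith)
  set D : ℝ := φ q - φ p with hDdef
  have hDpos : 0 < D := by simp [hDdef]; linarith
  set C0 : ℝ := φ q - φ (p - 1) with hC0def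
  have hC0pos : 0 < C0 := by simp [hC0def]; linarith
  obtain ⟨m, hm⟩ : ∃ m : ℕ, (1 / 2 : ℝ) ^ m < D / C0 :=
    exists_pow_lt_of_lt_one (by positivity) (by norm_num)
  obtain ⟨x', hx1, hx2, hx3⟩ := ITER m
  have hφx' : φ (p - 1) ≤ φ x' := by
    have hp2 : (0 : ℝ) < (1 / 2) ^ m := by positivity
    exact hmono (by linarith)
  have hbound : φ q - φ x' ≤ C0 := by simp [hC0def]; linarith
  have : D ≤ (1 / 2) ^ m * C0 := by
    calc D ≤ (1 / 2) ^ m * (φ q - φ x') := hx3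
      _ ≤ (1 / 2) ^ m * C0 := mul_le_mul_of_nonneg_left hbound (by positivity)
  have : D < D := by
    calc D ≤ (1 / 2) ^ m * C0 := this
      _ < (D / C0) * C0 := by exact mul_lt_mul_of_pos_right hm hC0pos
      _ = D := by field_simp
  exact lt_irrefl D this



lemma not_NSD_image {S : Type} [Fintype S] (φ : S → ℝ → ℝ) (U : Fin 3 → S → ℝ)
    (t' : ℝ) (ht0 : 0 ≤ t') (ht1 : t' ≤ 1)
    (hdom : ∀ s, φ s (U 0 s) < t' * φ s (U 1 s) + (1 - t') * φ s (U 2 s)) :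
    (0 : Fin 3) ∉ NSD (Set.univ : Set S) (fun x s => φ s (U x s)) := by
  simp only [NSD, Set.mem_setOf_eq, not_not]
  refine ⟨![0, t', 1 - t'], ⟨?_, ?_⟩, ?_⟩
  · intro y
    fin_cases y <;> simp <;> linarith
  · simp [Fin.sum_univ_three]
  · intro s _
    have hd := hdom s
    rw [Fin.sum_univ_three]
    simp only [Matrix.cons_val_zero, Matrix.cons_val_one, Matrix.head_cons,
      Matrix.cons_val_two, Matrix.tail_cons]
    linarith

lemma mono_step {S : Type} [Fintype S]
    (φ : S → ℝ → ℝ)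
    (h : ∀ (X : Type) [Fintype X] [Nonempty X] (U : X → S → ℝ),
          NSD (Set.univ : Set S) U ⊆ NSD Set.univ (fun x s => φ s (U x s)))
    (c d : S → ℝ) (hcd : ∀ s, φ s (c s) < φ s (d s))
    (s0 : S) : Monotone (φ s0) := by
  by_contra hm
  simp only [Monotone, not_forall] at hm
  push_neg at hm
  obtain ⟨a, b, hab, hba⟩ := hm
  set U : Fin 3 → S → ℝ := fun i s => if s = s0 then (if i = 0 then b else a)
    else (if i = 0 then c s else d s) with hU
  have h0 : (0 : Fin 3) ∈ NSD (Set.univ : Set S) U := by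
    apply mem_NSD_of_belief U 0 (fun s => if s = s0 then (1:ℝ) else 0)
    · intro s; by_cases hs : s = s0 <;> simp [hs]
    · simp [Finset.sum_ite_eq' univ s0 (fun _ => (1:ℝ))]
    · intro y
      rw [sum_one_point s0 (fun s => U y s), sum_one_point s0 (fun s => U 0 s)]
      by_cases hy : y = 0 <;> simp [hU, hy] <;> linarith
  have h1 := h (Fin 3) U h0
  refine not_NSD_image φ U 1 (by norm_num) le_rfl (fun s => ?_) h1
  by_cases hs : s = s0
  · subst hs
    have hU0 : U 0 s = b := by simp [hU]
    have hU1 : U 1 s = a := by norm_num [hU]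
    have hU2 : U 2 s = a := by simp [hU]
    rw [hU0, hU1, hU2]
    linarith
  · have hU0 : U 0 s = c s := by simp [hU, hs]
    have hU1 : U 1 s = d s := by norm_num [hU, hs]
    have hU2 : U 2 s = d s := by simp [hU, hs]
    rw [hU0, hU1, hU2]
    have := hcd s
    linarith

lemma concave_contra {S : Type} [Fintype S]
    (φ : S → ℝ → ℝ)
    (h : ∀ (X : Type) [Fintype X] [Nonempty X] (U : X → S → ℝ),
          NSD (Set.univ : Set S) U ⊆ NSD Set.univ (fun x s => φ s (U x s)))
    (hmono : ∀ s, Monotone (φ s))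
    (c d : S → ℝ) (hcd : ∀ s, φ s (c s) < φ s (d s))
    (s0 s1 : S) (hne : s0 ≠ s1)
    (L H τ : ℝ) (hLH : L < H) (hτ0 : 0 < τ) (hτ1 : τ < 1)
    (hΔ : φ s0 (τ * L + (1 - τ) * H) < τ * φ s0 L + (1 - τ) * φ s0 H) :
    False := by
  set m : ℝ := τ * L + (1 - τ) * H with hm
  have hGap : φ s0 L < φ s0 H := by
    rcases lt_or_eq_of_le (hmono s0 hLH.le) with hlt | heq
    · exact hlt
    · exfalso
      have hLm : L ≤ m := by rw [hm]; nlinarith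
      have := hmono s0 hLm
      rw [← heq] at hΔ
      nlinarith
  set Gap : ℝ := φ s0 H - φ s0 L with hGapdef
  have hGappos : 0 < Gap := by rw [hGapdef]; linarith
  set Δ : ℝ := τ * φ s0 L + (1 - τ) * φ s0 H - φ s0 m with hΔdef
  have hΔpos : 0 < Δ := by rw [hΔdef]; linarith
  set θ : ℝ := min (Δ / (2 * Gap)) ((1 - τ) / 2) with hθdef
  have hθpos : 0 < θ := by
    rw [hθdef]
    apply lt_min (by positivity) (by linarith)
  have hθτ : τ + θ < 1 := by
    have : θ ≤ (1 - τ) / 2 := min_le_right _ _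
    linarith
  have hθG : θ * Gap ≤ Δ / 2 := by
    have h1 : θ ≤ Δ / (2 * Gap) := min_le_left _ _
    calc θ * Gap ≤ (Δ / (2 * Gap)) * Gap := mul_le_mul_of_nonneg_right h1 hGappos.le
      _ = Δ / 2 := by field_simp
  obtain ⟨u, w, τ', huw, hττ', hτ'1, hτ'θ, hkey⟩ :=
    main_key (φ s1) (hmono s1) (hcd s1) hτ0 hθpos hθτ
  set α : ℝ := τ * w + (1 - τ) * u with hα
  set r : ℝ := (w - u) / (H - L) with hr
  have hrpos : 0 < r := by rw [hr]; apply div_pos <;> linarith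
  have hHL0 : H - L ≠ 0 := by linarith
  have hrHL : r * (H - L) = w - u := by
    rw [hr]; field_simp
  set μ1 : ℝ := 1 / (1 + r) with hμ1
  set μ0 : ℝ := r / (1 + r) with hμ0
  have h1r : (0:ℝ) < 1 + r := by linarith
  have hμ1pos : 0 < μ1 := by rw [hμ1]; positivity
  have hμ0pos : 0 < μ0 := by rw [hμ0]; positivity
  have hμ0r : μ0 = r * μ1 := by rw [hμ0, hμ1]; ring
  set U : Fin 3 → S → ℝ := fun i s =>
    if s = s0 then (if i = 0 then m else if i = 1 then L else H)
    else if s = s1 then (if i = 0 then α else if i = 1 then w else u)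
    else (if i = 0 then c s else d s) with hU
  set μ : S → ℝ := fun s => if s = s0 then μ0 else if s = s1 then μ1 else 0 with hμ
  -- values of U
  have hUs0 : ∀ i : Fin 3, U i s0 = (if i = 0 then m else if i = 1 then L else H) := by
    intro i; simp [hU]
  have hUs1 : ∀ i : Fin 3, U i s1 = (if i = 0 then α else if i = 1 then w else u) := by
    intro i; simp [hU, Ne.symm hne]
  have hUo : ∀ (i : Fin 3) (s : S), s ≠ s0 → s ≠ s1 →
      U i s = (if i = 0 then c s else d s) := by
    intro i s h1 h2; simp [hU, h1, h2]
  have h0 : (0 : Fin 3) ∈ NSD (Set.univ : Set S) U := by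
    apply mem_NSD_of_belief U 0 μ
    · intro s
      rw [hμ]
      by_cases h1 : s = s0 <;> by_cases h2 : s = s1 <;> simp [h1, h2] <;> positivity
    · have := sum_two_point hne μ0 μ1 (fun _ => (1:ℝ))
      simp only [mul_one] at this
      rw [hμ]
      rw [this]
      rw [hμ0, hμ1]; field_simp; ring
    · intro y
      rw [hμ, sum_two_point hne μ0 μ1 (fun s => U y s),
        sum_two_point hne μ0 μ1 (fun s => U 0 s)]
      rw [hUs0 y, hUs0 0, hUs1 y, hUs1 0]
      norm_num
      by_cases hy0 : y = 0
      · simp [hy0]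
      · by_cases hy1 : y = 1
        · rw [if_neg hy0, if_neg hy0, if_pos hy1, if_pos hy1]
          have heq : μ0 * L + μ1 * w = μ0 * m + μ1 * α := by
            rw [hμ0r, hm, hα]
            linear_combination (-(μ1 * (1 - τ))) * hrHL
          linarith [le_of_eq heq]
        · rw [if_neg hy0, if_neg hy0, if_neg hy1, if_neg hy1]
          have heq : μ0 * H + μ1 * u = μ0 * m + μ1 * α := by
            rw [hμ0r, hm, hα]
            linear_combination (μ1 * τ) * hrHL
          linarith [le_of_eq heq]
  have h1 := h (Fin 3) U h0
  have hτ'0 : 0 ≤ τ' := by linarith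
  refine not_NSD_image φ U τ' hτ'0 hτ'1.le (fun s => ?_) h1
  by_cases hs : s = s0
  · subst hs
    rw [hUs0 0, hUs0 1, hUs0 2]
    norm_num [Fin.ext_iff]
    -- φ s m < τ' * φ s L + (1 - τ') * φ s H
    have hτ'θ' : τ' - τ ≤ θ := by linarith
    have hprod : (τ' - τ) * Gap ≤ θ * Gap := mul_le_mul_of_nonneg_right hτ'θ' hGappos.le
    rw [hGapdef] at hprod hθG
    rw [hΔdef] at hθG
    nlinarith [hprod, hθG, hΔ]
  · by_cases hs1 : s = s1
    · subst hs1
      rw [hUs1 0, hUs1 1, hUs1 2]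
      norm_num [Fin.ext_iff]
      exact hkey
    · rw [hUo 0 s hs hs1, hUo 1 s hs hs1, hUo 2 s hs hs1]
      norm_num [Fin.ext_iff]
      have heq : τ' * φ s (d s) + (1 - τ') * φ s (d s) = φ s (d s) := by ring
      linarith [hcd s, le_of_eq heq]

theorem stmt11 {S : Type} [Fintype S] (hS : 2 ≤ Fintype.card S)
    (φ : S → ℝ → ℝ)
    (h : ∀ (X : Type) [Fintype X] [Nonempty X] (U : X → S → ℝ),
          NSD (Set.univ : Set S) U ⊆ NSD Set.univ (fun x s => φ s (U x s))) :
    (∀ s, ConcaveOn ℝ Set.univ (φ s) ∧ Monotone (φ s)) ∨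
    (∃ s, ∀ a b : ℝ, φ s a = φ s b) := by
  by_cases hconst : ∃ s, ∀ a b : ℝ, φ s a = φ s b
  · exact Or.inr hconst
  push_neg at hconst
  have hnc : ∀ s, ∃ cc dd : ℝ, φ s cc < φ s dd := by
    intro s
    obtain ⟨a, b, hab⟩ := hconst s
    rcases lt_or_gt_of_ne hab with h' | h'
    · exact ⟨a, b, h'⟩
    · exact ⟨b, a, h'⟩
  choose c d hcd using hnc
  have hmono : ∀ s, Monotone (φ s) := fun s0 => mono_step φ h c d hcd s0
  refine Or.inl (fun s0 => ⟨?_, hmono s0⟩)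
  by_contra hcc
  have hcc' : ¬ (∀ ⦃x : ℝ⦄, x ∈ (Set.univ : Set ℝ) → ∀ ⦃y : ℝ⦄, y ∈ (Set.univ : Set ℝ) →
      ∀ ⦃a b : ℝ⦄, 0 ≤ a → 0 ≤ b → a + b = 1 →
      a • φ s0 x + b • φ s0 y ≤ φ s0 (a • x + b • y)) := fun hh => hcc ⟨convex_univ, hh⟩
  push_neg at hcc'
  obtain ⟨x, -, y, -, a, b, ha, hb, hab1, hlt⟩ := hcc'
  simp only [smul_eq_mul] at hlt
  have hxy : x ≠ y := by
    rintro rfl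
    have h1 : a * x + b * x = x := by rw [← add_mul, hab1, one_mul]
    have h2 : a * φ s0 x + b * φ s0 x = φ s0 x := by rw [← add_mul, hab1, one_mul]
    rw [h1, h2] at hlt
    exact lt_irrefl _ hlt
  have ha0 : a ≠ 0 := by
    intro h0
    have hb1 : b = 1 := by linarith
    rw [h0, hb1] at hlt
    norm_num at hlt
  have hb0 : b ≠ 0 := by
    intro h0
    have ha1 : a = 1 := by linarith
    rw [h0, ha1] at hlt
    norm_num at hlt
  have hapos : 0 < a := lt_of_le_of_ne ha (Ne.symm ha0)
  have hbpos : 0 < b := lt_of_le_of_ne hb (Ne.symm hb0)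
  have halt1 : a < 1 := by linarith
  have hblt1 : b < 1 := by linarith
  obtain ⟨s1, hs1⟩ := Fintype.exists_ne_of_one_lt_card (by omega) s0
  rcases lt_trichotomy x y with hxy' | hxy'' | hxy'
  · refine concave_contra φ h hmono c d hcd s0 s1 (Ne.symm hs1) x y a hxy' hapos halt1 ?_
    have hb' : b = 1 - a := by linarith
    rw [hb'] at hlt
    exact hlt
  · exact absurd hxy'' hxy
  · refine concave_contra φ h hmono c d hcd s0 s1 (Ne.symm hs1) y x b hxy' hbpos hblt1 ?_
    have ha' : a = 1 - b := by linarith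
    rw [ha'] at hlt
    have harg : b * y + (1 - b) * x = (1 - b) * x + b * y := by ring
    rw [harg]
    linarith
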